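/- Fix an integer N ≥ 2 and a sign sequence ε : {1,…,2N} → {−1,+1} with ε₂ = −ε₁. Fix real numbers x₃ < x₄ < ⋯ < x_{2N} and ξ < x₃. Then, as (x₁,x₂) → (ξ,ξ) with x₁ < x₂ (< x₃), one has lim [U_ε(x₁,…,x_{2N}) − (x₂−x₁)^{−1/2} Ü_ε(x₃,…,x_{2N})] / (x₂−x₁)^{1/2} = Ü_ε(x₃,…,x_{2N}) · ∑_{i=3}^{2N} (ε₁ ε_i) / (2(x_i−ξ)). -/

import Mathlib

/-- Conformal block function `U_ε(x) = ∏_{i<j}(x_j−x_i)^{ε_iε_j/2}`. -/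
noncomputable def Ublock {K : ℕ} (ε : Fin K → ℝ) (x : Fin K → ℝ) : ℝ :=
  ∏ i : Fin K, ∏ j ∈ Finset.Ioi i, (x j - x i) ^ (ε i * ε j / 2)

/-- Extend the `2N−2` fixed points `y = (x₃,…,x_{2N})` to `2N` points by
prepending `x₁ = a` and `x₂ = b`. -/
noncomputable def extendPts (N : ℕ) (a b : ℝ) (y : Fin (2*N - 2) → ℝ) : Fin (2*N) → ℝ :=
  fun i => if h0 : i.1 = 0 then a else if h1 : i.1 = 1 then b
    else y ⟨i.1 - 2, by have := i.isLt; omega⟩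

lemma Ublock_succ {n : ℕ} (ε x : Fin (n+1) → ℝ) :
    Ublock ε x = (∏ j : Fin n, (x j.succ - x 0) ^ (ε 0 * ε j.succ / 2)) *
      Ublock (fun i => ε i.succ) (fun i => x i.succ) := by
  unfold Ublock
  rw [Fin.prod_univ_succ, Fin.prod_Ioi_zero]
  congr 1
  apply Finset.prod_congr rfl
  intro i _
  rw [Fin.prod_Ioi_succ]

lemma Ublock_key {n : ℕ} (ε : Fin (n+2) → ℝ) (y : Fin n → ℝ) (a b : ℝ)
    (hab : a < b) (hb : ∀ j, b < y j)
    (hsign : ε 1 = - ε 0) (h0 : ε 0 = 1 ∨ ε 0 = -1) :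
    Ublock ε (Fin.cons a (Fin.cons b y)) =
      (b - a) ^ (-(1/2) : ℝ) * Ublock (fun i => ε i.succ.succ) y *
        Real.exp (∑ j : Fin n,
          ε 0 * ε j.succ.succ / 2 * (Real.log (y j - a) - Real.log (y j - b))) := by
  have hya : ∀ j, (0:ℝ) < y j - a := fun j => by linarith [hb j]
  have hyb : ∀ j, (0:ℝ) < y j - b := fun j => by linarith [hb j]
  have he : ε 0 * ε 1 / 2 = -(1/2 : ℝ) := by
    rcases h0 with h | h <;> rw [hsign, h] <;> norm_num
  rw [Ublock_succ, Ublock_succ]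
  simp only [Fin.cons_succ, Fin.cons_zero]
  rw [Fin.prod_univ_succ]
  simp only [Fin.cons_succ, Fin.cons_zero, Fin.succ_zero_eq_one, he]
  rw [Real.exp_sum]
  have key : ∀ j : Fin n, Real.exp (ε 0 * ε j.succ.succ / 2 * (Real.log (y j - a) - Real.log (y j - b)))
      = (y j - a) ^ (ε 0 * ε j.succ.succ / 2) * (y j - b) ^ (ε 1 * ε j.succ.succ / 2) := by
    intro j
    rw [Real.rpow_def_of_pos (hya j), Real.rpow_def_of_pos (hyb j), ← Real.exp_add, hsign]
    congr 1
    ring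
  rw [Finset.prod_congr rfl (fun j _ => key j), Finset.prod_mul_distrib]
  ring

lemma Ublock_cast {K K' : ℕ} (h : K = K') (ε x : Fin K → ℝ) :
    Ublock ε x = Ublock (fun i => ε (Fin.cast h.symm i)) (fun i => x (Fin.cast h.symm i)) := by
  subst h; rfl

lemma extend_eq {N : ℕ} (a b : ℝ) (y : Fin (2*N-2) → ℝ)
    (h : 2*N = (2*N-2)+1+1) (i : Fin ((2*N-2)+1+1)) :
    extendPts N a b y (Fin.cast h.symm i) = (Fin.cons a (Fin.cons b y) : Fin ((2*N-2)+1+1) → ℝ) i := by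
  induction i using Fin.cases with
  | zero => simp [extendPts]
  | succ j =>
    induction j using Fin.cases with
    | zero => simp [extendPts]
    | succ k =>
      simp only [extendPts, Fin.cons_succ, Fin.coe_cast, Fin.val_succ]
      rw [dif_neg (by omega), dif_neg (by omega)]
      exact congrArg y (Fin.ext (by simp))

noncomputable def expRatio (t : ℝ) : ℝ := if t = 0 then 1 else (Real.exp t - 1) / t

lemma expRatio_mul (t d : ℝ) : expRatio t * (t / d) = (Real.exp t - 1) / d := by
  rcases eq_or_ne t 0 with h | h
  · simp [expRatio, h]
  · rw [expRatio, if_neg h, div_mul_div_comm, mul_comm (Real.exp t - 1) t,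
      mul_div_mul_left _ _ h]

lemma tendsto_expRatio : Filter.Tendsto expRatio (nhds 0) (nhds 1) := by
  have h1 : Filter.Tendsto expRatio (nhdsWithin 0 {(0:ℝ)}ᶜ) (nhds 1) := by
    have hd := Real.hasDerivAt_exp 0
    rw [Real.exp_zero] at hd
    have hs := hasDerivAt_iff_tendsto_slope.mp hd
    refine hs.congr' ?_
    filter_upwards [self_mem_nhdsWithin] with t ht
    have ht' : t ≠ 0 := ht
    simp [slope_def_field, expRatio, ht', Real.exp_zero]
  rw [← nhdsNE_sup_pure (0:ℝ)]
  refine Filter.Tendsto.sup h1 ?_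
  have h2 : expRatio 0 = 1 := by simp [expRatio]
  rw [← h2]
  exact tendsto_pure_nhds expRatio 0


/-- Frobenius expansion of the conformal block `U_ε` when `ε₂ = −ε₁`:
as `(x₁,x₂) → (ξ,ξ)` with `x₁ < x₂ < x₃`,
`[U_ε(x) − (x₂−x₁)^{−1/2}Ü_ε(x₃,…,x_{2N})]/(x₂−x₁)^{1/2} →
  Ü_ε(x₃,…,x_{2N})·∑_{i=3}^{2N} ε₁ε_i/(2(x_i−ξ))`. -/
theorem statement12 (N : ℕ) (hN : 2 ≤ N)
    (ε : Fin (2*N) → ℝ) (hε : ∀ i, ε i = 1 ∨ ε i = -1)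
    (hsign : ε ⟨1, by omega⟩ = - ε ⟨0, by omega⟩)
    (y : Fin (2*N - 2) → ℝ) (hy : StrictMono y) (ξ : ℝ) (hξ : ξ < y ⟨0, by omega⟩) :
    Filter.Tendsto
      (fun p : ℝ × ℝ =>
        (Ublock ε (extendPts N p.1 p.2 y) -
          (p.2 - p.1) ^ (-(1/2) : ℝ) *
            Ublock (fun i : Fin (2*N - 2) => ε ⟨i.1 + 2, by have := i.isLt; omega⟩) y) /
          (p.2 - p.1) ^ ((1/2) : ℝ))
      ((nhds ξ ×ˢ nhds ξ) ⊓ Filter.principal {p : ℝ × ℝ | p.1 < p.2 ∧ p.2 < y ⟨0, by omega⟩})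
      (nhds (Ublock (fun i : Fin (2*N - 2) => ε ⟨i.1 + 2, by have := i.isLt; omega⟩) y *
        ∑ i : Fin (2*N - 2),
          ε ⟨0, by omega⟩ * ε ⟨i.1 + 2, by have := i.isLt; omega⟩ / (2 * (y i - ξ)))) := by
  have hM : 0 < 2*N - 2 := by omega
  have hh : 2*N = (2*N-2)+1+1 := by omega
  set εs : Fin (2*N-2) → ℝ := fun i => ε ⟨i.1 + 2, by have := i.isLt; omega⟩ with hεs
  set e0 : ℝ := ε ⟨0, by omega⟩ with he0
  set Ub : ℝ := Ublock εs y with hUbdef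
  set F := (nhds ξ ×ˢ nhds ξ) ⊓
    Filter.principal {p : ℝ × ℝ | p.1 < p.2 ∧ p.2 < y ⟨0, by omega⟩} with hFdef
  set L : ℝ × ℝ → ℝ := fun p => ∑ j : Fin (2*N-2),
    e0 * εs j / 2 * (Real.log (y j - p.1) - Real.log (y j - p.2)) with hLdef
  have hy0le : ∀ j : Fin (2*N-2), y ⟨0, hM⟩ ≤ y j :=
    fun j => hy.monotone (by simp [Fin.le_def])
  have hyξ : ∀ j : Fin (2*N-2), ξ < y j := fun j => lt_of_lt_of_le hξ (hy0le j)
  have hfst : Filter.Tendsto (fun p : ℝ × ℝ => p.1) F (nhds ξ) :=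
    Filter.tendsto_fst.mono_left inf_le_left
  have hsnd : Filter.Tendsto (fun p : ℝ × ℝ => p.2) F (nhds ξ) :=
    Filter.tendsto_snd.mono_left inf_le_left
  have hmem : ∀ᶠ p : ℝ × ℝ in F, p.1 < p.2 ∧ p.2 < y ⟨0, hM⟩ :=
    Filter.le_principal_iff.mp inf_le_right
  have hlogA : ∀ j : Fin (2*N-2), Filter.Tendsto (fun p : ℝ × ℝ => Real.log (y j - p.1)) F
      (nhds (Real.log (y j - ξ))) :=
    fun j => (tendsto_const_nhds.sub hfst).log (sub_pos.2 (hyξ j)).ne'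
  have hlogB : ∀ j : Fin (2*N-2), Filter.Tendsto (fun p : ℝ × ℝ => Real.log (y j - p.2)) F
      (nhds (Real.log (y j - ξ))) :=
    fun j => (tendsto_const_nhds.sub hsnd).log (sub_pos.2 (hyξ j)).ne'
  -- the squeeze for the log-difference quotients
  have hratio : ∀ j : Fin (2*N-2), Filter.Tendsto
      (fun p : ℝ × ℝ => (Real.log (y j - p.1) - Real.log (y j - p.2)) / (p.2 - p.1)) F
      (nhds (1 / (y j - ξ))) := by
    intro j
    have hne : (y j - ξ) ≠ 0 := (sub_pos.2 (hyξ j)).ne'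
    have hlow : Filter.Tendsto (fun p : ℝ × ℝ => 1 / (y j - p.1)) F (nhds (1 / (y j - ξ))) :=
      tendsto_const_nhds.div (tendsto_const_nhds.sub hfst) hne
    have hupp : Filter.Tendsto (fun p : ℝ × ℝ => 1 / (y j - p.2)) F (nhds (1 / (y j - ξ))) :=
      tendsto_const_nhds.div (tendsto_const_nhds.sub hsnd) hne
    refine tendsto_of_tendsto_of_tendsto_of_le_of_le' hlow hupp ?_ ?_
    · filter_upwards [hmem] with p hp
      obtain ⟨hab, hb0⟩ := hp
      have hyb : p.2 < y j := lt_of_lt_of_le hb0 (hy0le j)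
      have hA : (0:ℝ) < y j - p.1 := by linarith
      have hB : (0:ℝ) < y j - p.2 := by linarith
      have hd : (0:ℝ) < p.2 - p.1 := by linarith
      have h1 : Real.log ((y j - p.2) / (y j - p.1)) ≤ (y j - p.2) / (y j - p.1) - 1 :=
        Real.log_le_sub_one_of_pos (div_pos hB hA)
      rw [Real.log_div hB.ne' hA.ne'] at h1
      have h2 : (y j - p.2) / (y j - p.1) - 1 = -((p.2 - p.1) / (y j - p.1)) := by
        field_simp
        ring
      rw [h2] at h1
      have h3 : (p.2 - p.1) / (y j - p.1) ≤ Real.log (y j - p.1) - Real.log (y j - p.2) := by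
        linarith
      calc 1 / (y j - p.1) = ((p.2 - p.1) / (y j - p.1)) / (p.2 - p.1) := by
            field_simp
          _ ≤ (Real.log (y j - p.1) - Real.log (y j - p.2)) / (p.2 - p.1) := by gcongr
    · filter_upwards [hmem] with p hp
      obtain ⟨hab, hb0⟩ := hp
      have hyb : p.2 < y j := lt_of_lt_of_le hb0 (hy0le j)
      have hA : (0:ℝ) < y j - p.1 := by linarith
      have hB : (0:ℝ) < y j - p.2 := by linarith
      have hd : (0:ℝ) < p.2 - p.1 := by linarith
      have h1 : Real.log ((y j - p.1) / (y j - p.2)) ≤ (y j - p.1) / (y j - p.2) - 1 :=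
        Real.log_le_sub_one_of_pos (div_pos hA hB)
      rw [Real.log_div hA.ne' hB.ne'] at h1
      have h2 : (y j - p.1) / (y j - p.2) - 1 = (p.2 - p.1) / (y j - p.2) := by
        field_simp
        ring
      rw [h2] at h1
      calc (Real.log (y j - p.1) - Real.log (y j - p.2)) / (p.2 - p.1)
          ≤ ((p.2 - p.1) / (y j - p.2)) / (p.2 - p.1) := by gcongr
        _ = 1 / (y j - p.2) := by
            field_simp
  -- L tends to 0
  have hL0 : Filter.Tendsto L F (nhds 0) := by
    have h := Filter.Tendsto.congr (fun p => rfl)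
      (tendsto_finset_sum (Finset.univ : Finset (Fin (2*N-2)))
        (fun j _ => (((hlogA j).sub (hlogB j)).const_mul (e0 * εs j / 2))))
    simpa using h
  have hexpc : Filter.Tendsto (fun p : ℝ × ℝ => expRatio (L p)) F (nhds 1) :=
    tendsto_expRatio.comp hL0
  -- R tends to the sum S
  have hR : Filter.Tendsto (fun p : ℝ × ℝ => ∑ j : Fin (2*N-2),
      e0 * εs j / 2 * ((Real.log (y j - p.1) - Real.log (y j - p.2)) / (p.2 - p.1))) F
      (nhds (∑ i : Fin (2*N-2), e0 * εs i / (2 * (y i - ξ)))) := by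
    have h := tendsto_finset_sum (Finset.univ : Finset (Fin (2*N-2)))
      (fun j _ => (hratio j).const_mul (e0 * εs j / 2))
    have heq : (∑ j : Fin (2*N-2), e0 * εs j / 2 * (1 / (y j - ξ)))
        = ∑ i : Fin (2*N-2), e0 * εs i / (2 * (y i - ξ)) :=
      Finset.sum_congr rfl (fun j _ => by rw [mul_one_div, div_div])
    rwa [heq] at h
  have hmain : Filter.Tendsto (fun p : ℝ × ℝ => Ub * (expRatio (L p) *
      ∑ j : Fin (2*N-2),
        e0 * εs j / 2 * ((Real.log (y j - p.1) - Real.log (y j - p.2)) / (p.2 - p.1)))) F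
      (nhds (Ub * ∑ i : Fin (2*N-2), e0 * εs i / (2 * (y i - ξ)))) := by
    have h := (tendsto_const_nhds (x := Ub) (f := F) (α := ℝ × ℝ)).mul (hexpc.mul hR)
    rwa [one_mul] at h
  refine Filter.Tendsto.congr' ?_ hmain
  -- the eventual equality
  have hc0 : (fun i : Fin ((2*N-2)+1+1) => ε (Fin.cast hh.symm i)) 0 = e0 :=
    congrArg ε (Fin.ext (by simp))
  have hc1 : (fun i : Fin ((2*N-2)+1+1) => ε (Fin.cast hh.symm i)) 1 = ε ⟨1, by omega⟩ :=
    congrArg ε (Fin.ext (by simp only [Fin.coe_cast, Fin.val_one]))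
  have hc2 : ∀ j : Fin (2*N-2), (fun i : Fin ((2*N-2)+1+1) => ε (Fin.cast hh.symm i)) j.succ.succ
      = εs j := fun j => congrArg ε (Fin.ext (by simp only [Fin.coe_cast, Fin.val_succ]))
  filter_upwards [hmem] with p hp
  obtain ⟨hab, hb0⟩ := hp
  have hb : ∀ j : Fin (2*N-2), p.2 < y j := fun j => lt_of_lt_of_le hb0 (hy0le j)
  have hd : (0:ℝ) < p.2 - p.1 := by linarith
  have hcast : Ublock ε (extendPts N p.1 p.2 y) =
      Ublock (fun i : Fin ((2*N-2)+1+1) => ε (Fin.cast hh.symm i))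
        (Fin.cons p.1 (Fin.cons p.2 y)) := by
    rw [Ublock_cast hh]
    congr 1
    funext i
    exact extend_eq p.1 p.2 y hh i
  have hsign' : (fun i : Fin ((2*N-2)+1+1) => ε (Fin.cast hh.symm i)) 1
      = - (fun i : Fin ((2*N-2)+1+1) => ε (Fin.cast hh.symm i)) 0 := by
    rw [hc0, hc1, he0]; exact hsign
  have h0' : (fun i : Fin ((2*N-2)+1+1) => ε (Fin.cast hh.symm i)) 0 = 1 ∨
      (fun i : Fin ((2*N-2)+1+1) => ε (Fin.cast hh.symm i)) 0 = -1 := hε _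
  have hkey := Ublock_key (fun i : Fin ((2*N-2)+1+1) => ε (Fin.cast hh.symm i)) y p.1 p.2
    hab hb hsign' h0'
  have hUbeq : Ublock (fun j : Fin (2*N-2) =>
      (fun i : Fin ((2*N-2)+1+1) => ε (Fin.cast hh.symm i)) j.succ.succ) y = Ub :=
    congrArg (fun f => Ublock f y) (funext hc2)
  have hLeq : (∑ j : Fin (2*N-2),
      (fun i : Fin ((2*N-2)+1+1) => ε (Fin.cast hh.symm i)) 0 *
        (fun i : Fin ((2*N-2)+1+1) => ε (Fin.cast hh.symm i)) j.succ.succ / 2 *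
        (Real.log (y j - p.1) - Real.log (y j - p.2))) = L p :=
    Finset.sum_congr rfl (fun j _ => by rw [hc0, hc2 j])
  have hU : Ublock ε (extendPts N p.1 p.2 y) =
      (p.2 - p.1) ^ (-(1/2) : ℝ) * Ub * Real.exp (L p) := by
    rw [hcast, hkey, hUbeq, hLeq]
  have hsum : (∑ j : Fin (2*N-2),
      e0 * εs j / 2 * ((Real.log (y j - p.1) - Real.log (y j - p.2)) / (p.2 - p.1)))
      = L p / (p.2 - p.1) := by
    rw [hLdef]
    simp only [Finset.sum_div, mul_div_assoc]
  have hz : (p.2 - p.1) ^ ((1/2) : ℝ) ≠ 0 := (Real.rpow_pos_of_pos hd _).ne'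
  have hX : (p.2 - p.1) ^ (-(1/2) : ℝ) = (p.2 - p.1)⁻¹ * (p.2 - p.1) ^ ((1/2) : ℝ) := by
    rw [← Real.rpow_neg_one (p.2 - p.1), ← Real.rpow_add hd]
    norm_num
  rw [hsum, expRatio_mul, hU, eq_div_iff hz, hX]
  ring
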